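/- Let L be β-smooth, ω' = ω - η(∇L(ω) + δ) with 0 < η ≤ 1/β, and suppose |⟨∇L(ω), δ⟩| ≤ a²‖∇L(ω)‖² for some a ∈ [0, 1/2) and ‖δ‖² ≤ σ². Then L(ω') ≤ L(ω) + (β η² σ²)/2 - η·(1 - a² - β η (1/2 - a²))·‖∇L(ω)‖². -/

import Mathlib

open scoped RealInnerProductSpace

lemma descent_lemma {d : ℕ} (L : EuclideanSpace ℝ (Fin d) → ℝ) (β : ℝ)
    (hdiff : Differentiable ℝ L)
    (hsmooth : ∀ x y, ‖gradient L x - gradient L y‖ ≤ β * ‖x - y‖)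
    (hβ : 0 ≤ β) (x v : EuclideanSpace ℝ (Fin d)) :
    L (x + v) ≤ L x + ⟪gradient L x, v⟫ + β / 2 * ‖v‖ ^ 2 := by
  set g : ℝ → ℝ := fun t => L (x + t • v) - t * ⟪gradient L x, v⟫ - β * t ^ 2 * ‖v‖ ^ 2 / 2
    with hg
  have hderiv : ∀ t : ℝ, HasDerivAt g
      (⟪gradient L (x + t • v), v⟫ - ⟪gradient L x, v⟫ - β * t * ‖v‖ ^ 2) t := by
    intro t
    have hc : HasDerivAt (fun t : ℝ => x + t • v) v t := by
      simpa using ((hasDerivAt_id t).smul_const v).const_add x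
    have h1 : HasDerivAt (fun t : ℝ => L (x + t • v)) ⟪gradient L (x + t • v), v⟫ t := by
      have := ((hdiff (x + t • v)).hasGradientAt.hasFDerivAt).comp_hasDerivAt t hc
      simpa [InnerProductSpace.toDual_apply_apply, Function.comp_def] using this
    have h2 : HasDerivAt (fun t : ℝ => t * ⟪gradient L x, v⟫) ⟪gradient L x, v⟫ t := by
      simpa using (hasDerivAt_id t).mul_const _
    have h3 : HasDerivAt (fun t : ℝ => β * t ^ 2 * ‖v‖ ^ 2 / 2) (β * t * ‖v‖ ^ 2) t := by
      have : HasDerivAt (fun t : ℝ => t ^ 2) (2 * t) t := by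
        simpa using hasDerivAt_pow 2 t
      have := ((this.const_mul β).mul_const (‖v‖ ^ 2)).div_const 2
      rw [show β * t * ‖v‖ ^ 2 = β * (2 * t) * ‖v‖ ^ 2 / 2 by ring]; exact this
    exact (h1.sub h2).sub h3
  have hdiffg : Differentiable ℝ g := fun t => (hderiv t).differentiableAt
  have hanti : AntitoneOn g (Set.Icc (0:ℝ) 1) := by
    apply antitoneOn_of_deriv_nonpos (convex_Icc (0:ℝ) 1)
      hdiffg.continuous.continuousOn hdiffg.differentiableOn
    intro t ht
    rw [interior_Icc] at ht
    rw [(hderiv t).deriv]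
    have h4 : ⟪gradient L (x + t • v) - gradient L x, v⟫ ≤ β * t * ‖v‖ ^ 2 := by
      calc ⟪gradient L (x + t • v) - gradient L x, v⟫
          ≤ ‖gradient L (x + t • v) - gradient L x‖ * ‖v‖ := real_inner_le_norm _ _
        _ ≤ (β * ‖(x + t • v) - x‖) * ‖v‖ := by
            gcongr; exact hsmooth _ _
        _ = β * t * ‖v‖ ^ 2 := by
            rw [add_sub_cancel_left, norm_smul, Real.norm_eq_abs,
              abs_of_pos ht.1]; ring
    have := inner_sub_left (𝕜 := ℝ) (gradient L (x + t • v)) (gradient L x) v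
    linarith [h4, this.symm]
  have h01 := hanti (Set.mem_Icc.2 ⟨le_rfl, zero_le_one⟩) (Set.mem_Icc.2 ⟨zero_le_one, le_rfl⟩) zero_le_one
  simp only [hg, zero_smul, add_zero, one_smul, zero_mul, one_mul, zero_pow, one_pow] at h01
  nlinarith [h01]

/-- Descent inequality with bounded-bias and bounded-variance gradient error. -/
theorem perturbed_descent_bounded {d : ℕ} (L : EuclideanSpace ℝ (Fin d) → ℝ) (β : ℝ)
    (hdiff : Differentiable ℝ L)
    (hsmooth : ∀ x y, ‖gradient L x - gradient L y‖ ≤ β * ‖x - y‖)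
    (ω δ : EuclideanSpace ℝ (Fin d)) (η a σ : ℝ)
    (hη : 0 < η) (hηβ : η ≤ 1 / β)
    (ha0 : 0 ≤ a) (ha : a < 1 / 2)
    (hbias : |⟪gradient L ω, δ⟫| ≤ a ^ 2 * ‖gradient L ω‖ ^ 2)
    (hvar : ‖δ‖ ^ 2 ≤ σ ^ 2) :
    L (ω - η • (gradient L ω + δ)) ≤
      L ω + (β * η ^ 2 * σ ^ 2) / 2
        - η * (1 - a ^ 2 - β * η * (1 / 2 - a ^ 2)) * ‖gradient L ω‖ ^ 2 := by
  have hβ : 0 < β := by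
    by_contra h
    push_neg at h
    have : 1 / β ≤ 0 := div_nonpos_iff.2 (Or.inl ⟨zero_le_one, h⟩)
    linarith
  have hβη : β * η ≤ 1 := by
    rw [le_div_iff₀ hβ] at hηβ; linarith
  set g := gradient L ω with hgdef
  have key := descent_lemma L β hdiff hsmooth hβ.le ω (-(η • (g + δ)))
  rw [← sub_eq_add_neg] at key
  have hinner : ⟪g, -(η • (g + δ))⟫ = -η * (‖g‖ ^ 2 + ⟪g, δ⟫) := by
    rw [inner_neg_right, inner_smul_right, inner_add_right, real_inner_self_eq_norm_sq]
    ring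
  have hnorm : ‖-(η • (g + δ))‖ ^ 2 = η ^ 2 * (‖g‖ ^ 2 + 2 * ⟪g, δ⟫ + ‖δ‖ ^ 2) := by
    rw [norm_neg, norm_smul, mul_pow, Real.norm_eq_abs, sq_abs]
    congr 1
    rw [← real_inner_self_eq_norm_sq, inner_add_add_self, real_inner_self_eq_norm_sq,
      real_inner_self_eq_norm_sq, real_inner_comm]
    ring
  rw [hinner, hnorm] at key
  have habs := abs_le.1 hbias
  nlinarith [key, mul_nonneg (sub_nonneg.2 hβη) (by linarith [habs.1] :
      (0:ℝ) ≤ ⟪g, δ⟫ + a ^ 2 * ‖g‖ ^ 2), sq_nonneg η, mul_pos hη hη,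
    mul_nonneg (mul_nonneg hβ.le (sq_nonneg η)) (sub_nonneg.2 hvar)]
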